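/- arXiv:1303.0926 — 4 statements merged into one kernel-verified Lean document; each statement's English description precedes it below -/
import Mathlib

section
/- Let p be an odd prime, e ≥ 2, and let γ be a unit of Z/p^eZ with γ^(p−1) ≠ 1. Then 1 + p^(e−1) lies in the cyclic subgroup generated by γ. -/
/-- Key divisibility: if `p` is an odd prime, `e ≥ 2`, and `p^e ∣ A^p - 1`,
then `p^(e-1) ∣ A - 1`. -/
lemma aux_dvd (p e : ℕ) (hp : p.Prime) (hodd : Odd p) (he : 2 ≤ e) (A : ℤ)
    (h : (p : ℤ) ^ e ∣ A ^ p - 1) : (p : ℤ) ^ (e - 1) ∣ A - 1 := by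
  haveI : Fact p.Prime := ⟨hp⟩
  -- base step: p ∣ A - 1
  have hbase : (p : ℤ) ∣ A - 1 := by
    have h1 : (p : ℤ) ∣ A ^ p - 1 :=
      dvd_trans (dvd_pow_self _ (by omega : e ≠ 0)) h
    have h2 : ((A : ZMod p)) ^ p = 1 := by
      have h0 : ((A ^ p - 1 : ℤ) : ZMod p) = 0 := by
        rw [ZMod.intCast_zmod_eq_zero_iff_dvd]
        exact_mod_cast h1
      push_cast at h0
      linear_combination h0
    have h3 : (A : ZMod p) = 1 := by rw [← ZMod.pow_card (A : ZMod p), h2]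
    have h0 : ((A - 1 : ℤ) : ZMod p) = 0 := by push_cast; rw [h3]; ring
    rw [ZMod.intCast_zmod_eq_zero_iff_dvd] at h0
    exact_mod_cast h0
  have hA : ¬ (p : ℤ) ∣ A := by
    intro hd
    have h1 : (p : ℤ) ∣ 1 := (dvd_sub_right hd).mp (by simpa using hbase)
    have := Int.le_of_dvd one_pos h1
    have := hp.two_le
    omega
  -- lifting the exponent
  have hlte := Int.emultiplicity_pow_sub_pow hp hodd (x := A) (y := 1) (by simpa using hbase) hA p
  rw [one_pow] at hlte
  have hpp : emultiplicity p p = 1 := by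
    simpa using emultiplicity_pow_self_of_prime hp.prime 1
  rw [hpp] at hlte
  have hle : (e : ℕ∞) ≤ emultiplicity ((p : ℤ)) (A ^ p - 1) :=
    le_emultiplicity_of_pow_dvd h
  rw [hlte] at hle
  have hcast : ((e - 1 : ℕ) : ℕ∞) + 1 = (e : ℕ∞) := by
    norm_cast
    omega
  rw [← hcast] at hle
  exact pow_dvd_of_le_emultiplicity
    ((WithTop.add_le_add_iff_right (by exact ENat.one_ne_top)).mp hle)

lemma aux_pow {R : Type*} [CommRing R] (t y : R) (hy : y * y = 0) :
    ∀ m : ℕ, (1 + t * y) ^ m = 1 + (m : R) * t * y := by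
  intro m
  induction m with
  | zero => simp
  | succ m ih =>
      rw [pow_succ, ih]
      push_cast
      linear_combination (((m : R)) * t * t) * hy

/-- For odd prime `p`, `e ≥ 2`, and a unit `γ` of `Z/p^eZ` with `γ ^ (p - 1) ≠ 1`,
the element `1 + p ^ (e - 1)` lies in the subgroup generated by `γ`. -/
theorem stmt_8 (p e : ℕ) (hp : p.Prime) (hodd : Odd p) (he : 2 ≤ e)
    (γ : (ZMod (p ^ e))ˣ) (hγ : γ ^ (p - 1) ≠ 1) :
    ∃ k : ℤ, ((γ ^ k : (ZMod (p ^ e))ˣ) : ZMod (p ^ e)) = 1 + (p : ZMod (p ^ e)) ^ (e - 1) := by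
  haveI : Fact p.Prime := ⟨hp⟩
  haveI : NeZero (p ^ e) := ⟨pow_ne_zero e hp.pos.ne'⟩
  set n := orderOf γ with hn
  have hn0 : n ≠ 0 := (orderOf_pos γ).ne'
  have hcard : Fintype.card (ZMod (p ^ e))ˣ = p ^ (e - 1) * (p - 1) := by
    rw [ZMod.card_units_eq_totient, Nat.totient_prime_pow hp (by omega)]
  have hpn : p ∣ n := by
    by_contra hnd
    have hco : Nat.Coprime n (p ^ (e - 1)) :=
      ((hp.coprime_iff_not_dvd.mpr hnd).symm).pow_right _
    have hdvd : n ∣ p ^ (e - 1) * (p - 1) := hcard ▸ orderOf_dvd_card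
    exact hγ (orderOf_dvd_iff_pow_eq_one.mp (hco.dvd_of_dvd_mul_left hdvd))
  -- δ is a nontrivial p-th root of unity
  set δ := γ ^ (n / p) with hδ
  have hδp : δ ^ p = 1 := by
    rw [hδ, ← pow_mul, Nat.div_mul_cancel hpn, hn, pow_orderOf_eq_one]
  have hδ1 : δ ≠ 1 := by
    intro h1
    have hd : n ∣ n / p := hn ▸ orderOf_dvd_of_pow_eq_one h1
    have h2 : 0 < n / p := Nat.div_pos (Nat.le_of_dvd (Nat.pos_of_ne_zero hn0) hpn) hp.pos
    have := Nat.le_of_dvd h2 hd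
    have := Nat.div_lt_self (Nat.pos_of_ne_zero hn0) hp.one_lt
    omega
  set x : ZMod (p ^ e) := (δ : ZMod (p ^ e)) with hx
  set A : ℤ := (x.val : ℤ) with hA
  have hxA : (A : ZMod (p ^ e)) = x := by
    rw [hA]; push_cast; simp [ZMod.natCast_val, ZMod.cast_id]
  have hxp : x ^ p = 1 := by
    rw [hx, ← Units.val_pow_eq_pow_val, hδp, Units.val_one]
  have hApe : (p : ℤ) ^ e ∣ A ^ p - 1 := by
    have h0 : ((A ^ p - 1 : ℤ) : ZMod (p ^ e)) = 0 := by
      push_cast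
      rw [hxA, hxp]
      ring
    rw [ZMod.intCast_zmod_eq_zero_iff_dvd] at h0
    exact_mod_cast h0
  obtain ⟨c, hc⟩ := aux_dvd p e hp hodd he A hApe
  -- x = 1 + c * p^(e-1)
  set y : ZMod (p ^ e) := (p : ZMod (p ^ e)) ^ (e - 1) with hy
  set t : ZMod (p ^ e) := ((c : ℤ) : ZMod (p ^ e)) with ht
  have hpe0 : (p : ZMod (p ^ e)) ^ e = 0 := by
    have : ((p ^ e : ℕ) : ZMod (p ^ e)) = 0 := ZMod.natCast_self _
    push_cast at this
    exact this
  have hy2 : y * y = 0 := by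
    rw [hy, ← pow_add, show e - 1 + (e - 1) = e + (e - 2) by omega, pow_add, hpe0, zero_mul]
  have hxty : x = 1 + t * y := by
    have : (A : ZMod (p ^ e)) = 1 + t * y := by
      have : A = 1 + c * (p : ℤ) ^ (e - 1) := by linarith [hc]
      rw [this]
      push_cast
      ring
    rw [← hxA, this]
  -- p does not divide c
  have hty0 : t * y ≠ 0 := by
    intro h0
    apply hδ1
    apply Units.ext
    rw [← hx, hxty, h0, add_zero, Units.val_one]
  have hpc : ¬ (p : ℤ) ∣ c := by
    rintro ⟨d, rfl⟩
    apply hty0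
    rw [ht, hy]
    push_cast
    rw [show (p : ZMod (p ^ e)) * (d : ZMod (p ^ e)) * (p : ZMod (p ^ e)) ^ (e - 1)
        = (d : ZMod (p ^ e)) * (p : ZMod (p ^ e)) ^ (1 + (e - 1)) by ring,
      show 1 + (e - 1) = e by omega, hpe0, mul_zero]
  -- choose m with m * c ≡ 1 mod p
  have hc0 : ((c : ZMod p)) ≠ 0 := by
    rw [Ne, ZMod.intCast_zmod_eq_zero_iff_dvd]
    exact_mod_cast hpc
  set m : ℕ := ((c : ZMod p)⁻¹).val with hm
  have hmc : (p : ℤ) ∣ (m : ℤ) * c - 1 := by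
    have h0 : (((m : ℤ) * c - 1 : ℤ) : ZMod p) = 0 := by
      push_cast
      rw [hm]
      simp only [ZMod.natCast_val, ZMod.cast_id]
      rw [inv_mul_cancel₀ hc0]
      ring
    rw [ZMod.intCast_zmod_eq_zero_iff_dvd] at h0
    exact_mod_cast h0
  obtain ⟨s, hs⟩ := hmc
  -- final computation
  refine ⟨((m * (n / p) : ℕ) : ℤ), ?_⟩
  rw [zpow_natCast, show m * (n / p) = n / p * m by ring, pow_mul, ← hδ,
    Units.val_pow_eq_pow_val, ← hx, hxty, aux_pow t y hy2 m]
  have hmty : (m : ZMod (p ^ e)) * t * y = y := by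
    have h1 : (m : ZMod (p ^ e)) * t = 1 + (p : ZMod (p ^ e)) * ((s : ℤ) : ZMod (p ^ e)) := by
      have : ((m : ℤ) * c : ℤ) = 1 + p * s := by linarith [hs]
      have h2 := congrArg (fun z : ℤ => ((z : ZMod (p ^ e)))) this
      push_cast at h2
      rw [ht]
      exact h2
    rw [h1, hy]
    rw [show (1 + (p : ZMod (p ^ e)) * ((s : ℤ) : ZMod (p ^ e))) * (p : ZMod (p ^ e)) ^ (e - 1)
        = (p : ZMod (p ^ e)) ^ (e - 1)
          + ((s : ℤ) : ZMod (p ^ e)) * (p : ZMod (p ^ e)) ^ (1 + (e - 1)) by ring,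
      show 1 + (e - 1) = e by omega, hpe0, mul_zero, add_zero]
  rw [hmty, hy]
end

section
/- Let p be an odd prime and n ≥ 1, q = p^n. The number of elements δ̄ ∈ F_q with δ̄^2 ∉ F_p equals q − p if n is odd, and q + 1 − 2p if n is even. -/
/-- In a commutative monoid, if `b ^ ((p-1)/2) = u` with `u * u = 1` and `p` odd,
then `b ^ ((p^n - 1)/2) = u ^ n`. -/
lemma aux_pow_half {M : Type*} [CommMonoid M] (p : ℕ) (hp : Odd p) (b u : M)
    (hu : u * u = 1) (hbu : b ^ ((p - 1) / 2) = u) :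
    ∀ n : ℕ, b ^ ((p ^ n - 1) / 2) = u ^ n := by
  obtain ⟨k, hk⟩ := hp
  have hk2 : (p - 1) / 2 = k := by omega
  have huodd : ∀ m : ℕ, u ^ (2 * m + 1) = u := by
    intro m
    rw [pow_succ, pow_mul, pow_two, hu, one_pow, one_mul]
  intro n
  induction n with
  | zero => simp
  | succ n ih =>
    have hpodd : Odd p := ⟨k, hk⟩
    obtain ⟨m, hm⟩ := hpodd.pow (n := n)
    have hm2 : (p ^ n - 1) / 2 = m := by omega
    have hkey : p ^ (n + 1) = 2 * (m + k * (2 * m + 1)) + 1 := by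
      rw [pow_succ, hm, hk]; ring
    set t := k * (2 * m + 1) with ht
    have h2 : (p ^ (n + 1) - 1) / 2 = m + t := by omega
    have ihm : b ^ m = u ^ n := by rw [← hm2]; exact ih
    have hbk : b ^ k = u := by rw [← hk2]; exact hbu
    rw [h2, pow_add, ihm, ht, pow_mul, hbk, huodd, pow_succ]

/-- In the finite field `F` with `p ^ n` elements (`p` odd prime), the number of
`δ` with `δ ^ 2 ∉ F_p` is `q - p` for odd `n`, and `q + 1 - 2 p` for even `n`. -/
theorem stmt_12 (p n : ℕ) [Fact p.Prime] (hodd : Odd p) (hn : 1 ≤ n)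
    (F : Type*) [Field F] [Fintype F] [Algebra (ZMod p) F]
    (hcard : Fintype.card F = p ^ n) :
    (Odd n →
      Set.ncard {δ : F | δ ^ 2 ∉ Set.range (algebraMap (ZMod p) F)} = p ^ n - p) ∧
    (Even n →
      Set.ncard {δ : F | δ ^ 2 ∉ Set.range (algebraMap (ZMod p) F)} = p ^ n + 1 - 2 * p) := by
  classical
  have hp := (Fact.out : p.Prime)
  have hp2 : p ≠ 2 := by rcases hodd with ⟨k, hk⟩; omega
  have hp1 : 1 < p := hp.one_lt
  have hinj : Function.Injective (algebraMap (ZMod p) F) := (algebraMap (ZMod p) F).injective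
  haveI hchF : CharP F p := charP_of_injective_algebraMap hinj p
  have hF2 : ringChar F ≠ 2 := by
    rw [ringChar.eq F p]; exact hp2
  have hZ2 : ringChar (ZMod p) ≠ 2 := by
    rw [ZMod.ringChar_zmod_n]; exact hp2
  -- helper: `u * u = 1` for `u = b ^ ((p-1)/2)`
  have hhalf : (p - 1) / 2 + (p - 1) / 2 = p - 1 := by
    obtain ⟨k, hk⟩ := hodd; omega
  have huu : ∀ b : ZMod p, b ≠ 0 →
      b ^ ((p - 1) / 2) * b ^ ((p - 1) / 2) = 1 := by
    intro b hb
    rw [← pow_add, hhalf]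
    exact ZMod.pow_card_sub_one_eq_one hb
  -- the set of "good" elements as a finset
  set A : Finset F := Finset.univ.filter
      (fun δ : F => δ ^ 2 ∈ Set.range (algebraMap (ZMod p) F)) with hA
  -- fibers
  have hfib : ∀ a : F,
      ((Finset.univ.filter (fun δ : F => δ ^ 2 = a)).card : ℤ) = quadraticChar F a + 1 := by
    intro a
    have h := quadraticChar_card_sqrts hF2 a
    rw [← h]
    norm_cast
    apply Finset.card_bij (fun x _ => x)
    · intro x hx; simp only [Finset.mem_filter] at hx
      rw [Set.mem_toFinset]; exact hx.2
    · intro x _ y _ h; exact h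
    · intro x hx; rw [Set.mem_toFinset] at hx
      exact ⟨x, by simpa using hx, rfl⟩
  have hAcard : (A.card : ℤ) =
      ∑ b : ZMod p, ((quadraticChar F (algebraMap (ZMod p) F b) : ℤ) + 1) := by
    have hbiU : A = Finset.univ.biUnion
        (fun b : ZMod p => Finset.univ.filter
          (fun δ : F => δ ^ 2 = algebraMap (ZMod p) F b)) := by
      ext δ
      simp only [hA, Finset.mem_filter, Finset.mem_univ, true_and, Finset.mem_biUnion,
        Set.mem_range]
      exact exists_congr fun b => eq_comm
    rw [hbiU, Finset.card_biUnion]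
    · push_cast
      exact Finset.sum_congr rfl fun b _ => hfib _
    · intro b _ c _ hbc
      simp only [Finset.disjoint_left, Finset.mem_filter, Finset.mem_univ, true_and]
      intro x hx hx'
      exact hbc (hinj (hx ▸ hx'))
  -- the key power computation
  have hqodd : Odd (p ^ n) := hodd.pow
  have hq2 : Fintype.card F / 2 = (p ^ n - 1) / 2 := by
    rw [hcard]; obtain ⟨m, hm⟩ := hqodd; omega
  have key : ∀ b : ZMod p, b ≠ 0 →
      (algebraMap (ZMod p) F b) ^ (Fintype.card F / 2)
        = algebraMap (ZMod p) F ((b ^ ((p - 1) / 2)) ^ n) := by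
    intro b hb
    have h := aux_pow_half p hodd b (b ^ ((p - 1) / 2)) (huu b hb) rfl n
    rw [hq2, ← map_pow, h]
  -- squares in ZMod p criterion
  have hZsq : ∀ b : ZMod p, b ≠ 0 → (IsSquare b ↔ b ^ ((p - 1) / 2) = 1) := by
    intro b hb
    have h := FiniteField.isSquare_iff hZ2 hb
    rwa [ZMod.card, show p / 2 = (p - 1) / 2 by obtain ⟨k, hk⟩ := hodd; omega] at h
  -- evaluate quadratic character of images, depending on parity
  have hchar_odd : Odd n → ∀ b : ZMod p,
      quadraticChar F (algebraMap (ZMod p) F b) = quadraticChar (ZMod p) b := by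
    intro hno b
    by_cases hb : b = 0
    · subst hb; simp
    have hmapne : algebraMap (ZMod p) F b ≠ 0 := by
      simpa using (map_ne_zero_iff _ hinj).mpr hb
    have hiff : IsSquare (algebraMap (ZMod p) F b) ↔ IsSquare b := by
      rw [FiniteField.isSquare_iff hF2 hmapne, key b hb, hZsq b hb]
      obtain ⟨j, hj⟩ := hno
      constructor
      · intro h
        have h1 : (b ^ ((p - 1) / 2)) ^ n = 1 := hinj (by simpa using h)
        have heq : (b ^ ((p - 1) / 2)) ^ n = b ^ ((p - 1) / 2) := by
          rw [hj]
          have h3 : (b ^ ((p - 1) / 2)) ^ (2 * j + 1)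
              = (b ^ ((p - 1) / 2) * b ^ ((p - 1) / 2)) ^ j * b ^ ((p - 1) / 2) := by ring
          rw [h3, huu b hb, one_pow, one_mul]
        rw [← heq, h1]
      · intro h; rw [h, one_pow, map_one]
    by_cases hs : IsSquare b
    · rw [(quadraticChar_one_iff_isSquare hmapne).mpr (hiff.mpr hs),
        (quadraticChar_one_iff_isSquare hb).mpr hs]
    · rw [quadraticChar_neg_one_iff_not_isSquare.mpr (fun h => hs (hiff.mp h)),
        quadraticChar_neg_one_iff_not_isSquare.mpr hs]
  have hchar_even : Even n → ∀ b : ZMod p, b ≠ 0 →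
      quadraticChar F (algebraMap (ZMod p) F b) = 1 := by
    intro hne b hb
    have hmapne : algebraMap (ZMod p) F b ≠ 0 := by
      simpa using (map_ne_zero_iff _ hinj).mpr hb
    apply (quadraticChar_one_iff_isSquare hmapne).mpr
    rw [FiniteField.isSquare_iff hF2 hmapne, key b hb]
    obtain ⟨j, hj⟩ := hne
    have h1 : (b ^ ((p - 1) / 2)) ^ n = 1 := by
      rw [hj, show j + j = 2 * j by ring, pow_mul, pow_two, huu b hb, one_pow]
    rw [h1, map_one]
  -- the complement description
  have hset : {δ : F | δ ^ 2 ∉ Set.range (algebraMap (ZMod p) F)} = (↑(Aᶜ) : Set F) := by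
    ext δ
    simp [hA]
  have hncard : {δ : F | δ ^ 2 ∉ Set.range (algebraMap (ZMod p) F)}.ncard
      = p ^ n - A.card := by
    rw [hset, Set.ncard_coe_finset, Finset.card_compl, hcard]
  constructor
  · intro hno
    have hsum : (A.card : ℤ) = p := by
      rw [hAcard]
      rw [Finset.sum_congr rfl fun b _ => by rw [hchar_odd hno b]]
      rw [Finset.sum_add_distrib]
      rw [quadraticChar_sum_zero hZ2, Finset.sum_const, Finset.card_univ, ZMod.card]
      simp
    have hAc : A.card = p := by exact_mod_cast hsum
    rw [hncard, hAc]
  · intro hne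
    have hterm : ∀ b : ZMod p, ((quadraticChar F (algebraMap (ZMod p) F b) : ℤ) + 1)
        = if b = 0 then 1 else 2 := by
      intro b
      by_cases hb : b = 0
      · subst hb; simp
      · rw [if_neg hb, hchar_even hne b hb]; norm_num
    have hsum : (A.card : ℤ) = 2 * p - 1 := by
      rw [hAcard, Finset.sum_congr rfl fun b _ => hterm b]
      rw [← Finset.sum_erase_add _ _ (Finset.mem_univ (0 : ZMod p))]
      rw [Finset.sum_congr rfl (fun b hb => if_neg (Finset.ne_of_mem_erase hb)),
        Finset.sum_const, if_pos rfl]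
      rw [Finset.card_erase_of_mem (Finset.mem_univ _), Finset.card_univ, ZMod.card]
      simp only [nsmul_eq_mul, Nat.cast_sub hp1.le, Nat.cast_one]
      ring
    have hAc : A.card = 2 * p - 1 := by omega
    have hge : 2 * p ≤ p ^ n + 1 := by
      obtain ⟨j, hj⟩ := hne
      have hn2 : 2 ≤ n := by omega
      have h1 : p ^ 2 ≤ p ^ n := Nat.pow_le_pow_right (by omega) hn2
      have h2 : p ^ 2 = p * p := by ring
      nlinarith
    rw [hncard, hAc]
    omega
end

section
/- Let p be an odd prime, e ≥ 2, and M ≥ 2 an integer that is not a power of p. Define ψ : Z/p^eZ → Z by ψ(x) = (the representative of x in {0,…,p^e−1}) mod M. Then for every a ∈ Z/p^eZ there exists j ∈ {0,…,p−2} such that ψ(a + j·p^(e−1)) ≠ ψ(a + (j+1)·p^(e−1)); in particular ψ is not constant on any coset a + p^(e−1)·(Z/p^eZ). -/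
/-- For `ψ x = x.val % M` on `Z/p^eZ`, with `M ≥ 2` not a power of `p`: for every
`a` there is `j ≤ p - 2` with `ψ (a + j p^(e-1)) ≠ ψ (a + (j+1) p^(e-1))`; in
particular `ψ` is not constant on the coset `a + p^(e-1) * (Z/p^eZ)`. -/
theorem stmt_16 (p e M : ℕ) (hp : p.Prime) (hodd : Odd p) (he : 2 ≤ e)
    (hM : 2 ≤ M) (hMp : ∀ t : ℕ, M ≠ p ^ t) :
    ∀ a : ZMod (p ^ e),
      (∃ j : ℕ, j ≤ p - 2 ∧
        (a + (j : ZMod (p ^ e)) * (p : ZMod (p ^ e)) ^ (e - 1)).val % M ≠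
        (a + ((j : ZMod (p ^ e)) + 1) * (p : ZMod (p ^ e)) ^ (e - 1)).val % M) ∧
      ¬ (∀ r s : ZMod (p ^ e),
        (a + (p : ZMod (p ^ e)) ^ (e - 1) * r).val % M =
        (a + (p : ZMod (p ^ e)) ^ (e - 1) * s).val % M) := by
  intro a
  have hp2 : 2 ≤ p := hp.two_le
  have hp3 : 3 ≤ p := by
    have h := Nat.odd_iff.mp hodd
    omega
  set q : ℕ := p ^ (e - 1) with hq
  have hNe : p ^ e = q * p := by
    rw [hq, ← pow_succ]
    congr 1
    omega
  have hq1 : 1 ≤ q := Nat.one_le_pow _ _ (by omega)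
  have hNpos : 0 < p ^ e := pow_pos (by omega) e
  haveI : NeZero (p ^ e) := ⟨by omega⟩
  have hMq : ¬ M ∣ q := by
    intro h
    obtain ⟨t, _, ht⟩ := (Nat.dvd_prime_pow hp).mp h
    exact hMp t ht
  set A := a.val with hA
  have hAN : A < p ^ e := ZMod.val_lt a
  set r := A % q with hr
  set k := A / q with hk
  have hAdm : q * k + r = A := Nat.div_add_mod A q
  have hrq : r < q := Nat.mod_lt _ (by omega)
  have hkp : k < p := Nat.div_lt_of_lt_mul (hNe ▸ hAN)
  have key : ∀ j : ℕ, (a + (j : ZMod (p ^ e)) * (p : ZMod (p ^ e)) ^ (e - 1)).val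
      = (A + j * q) % (p ^ e) := by
    intro j
    have h1 : (j : ZMod (p ^ e)) * (p : ZMod (p ^ e)) ^ (e - 1)
        = ((j * q : ℕ) : ZMod (p ^ e)) := by
      rw [hq]; push_cast; ring
    rw [h1, ZMod.val_add, ZMod.val_natCast, Nat.add_mod_mod]
  obtain ⟨j, hj, hstep⟩ : ∃ j : ℕ, j ≤ p - 2 ∧
      (A + (j + 1) * q) % (p ^ e) = (A + j * q) % (p ^ e) + q := by
    rcases eq_or_ne k (p - 1) with hk1 | hk1
    · refine ⟨1, by omega, ?_⟩
      have hpk : p = k + 1 := by omega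
      have hNqk : p ^ e = q * k + q := by rw [hNe, hpk]; ring
      have hk1' : q * 1 ≤ q * k := Nat.mul_le_mul_left q (by omega)
      have hA2 : A + 2 * q = (r + q) + p ^ e := by linarith
      have hA1 : A + 1 * q = r + p ^ e := by linarith
      rw [hA2, hA1, Nat.add_mod_right, Nat.add_mod_right,
        Nat.mod_eq_of_lt (by linarith : r + q < p ^ e),
        Nat.mod_eq_of_lt (by linarith : r < p ^ e)]
    · refine ⟨0, by omega, ?_⟩
      have h2 : q * (k + 2) ≤ q * p := Nat.mul_le_mul_left q (by omega)
      have h3 : q * (k + 2) = q * k + q + q := by ring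
      have hlt : A + 1 * q < p ^ e := by linarith
      rw [Nat.mod_eq_of_lt hlt, Nat.mod_eq_of_lt (by linarith : A + 0 * q < p ^ e)]
      ring
  have hne : (a + (j : ZMod (p ^ e)) * (p : ZMod (p ^ e)) ^ (e - 1)).val % M ≠
      (a + ((j : ZMod (p ^ e)) + 1) * (p : ZMod (p ^ e)) ^ (e - 1)).val % M := by
    have hcast : ((j : ZMod (p ^ e)) + 1) = ((j + 1 : ℕ) : ZMod (p ^ e)) := by
      push_cast; ring
    rw [key j, hcast, key (j + 1), hstep]
    intro h
    apply hMq
    have hmod : (A + j * q) % (p ^ e) ≡ (A + j * q) % (p ^ e) + q [MOD M] := h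
    have := (Nat.modEq_iff_dvd' (Nat.le_add_right _ q)).mp hmod
    simpa using this
  refine ⟨⟨j, hj, hne⟩, fun H => hne ?_⟩
  have h := H (j : ZMod (p ^ e)) ((j : ZMod (p ^ e)) + 1)
  rwa [mul_comm ((p : ZMod (p ^ e)) ^ (e - 1)) (j : ZMod (p ^ e)),
    mul_comm ((p : ZMod (p ^ e)) ^ (e - 1)) ((j : ZMod (p ^ e)) + 1)] at h
end

section
/- Let p be an odd prime, e ≥ 2, and let γ be an element of Z/p^eZ of multiplicative order m, where m > 1 divides p−1. Write integer representatives. For 1 ≤ i < e and any a ∈ Z/p^eZ whose representative is not divisible by p^i, define for x ∈ Z/p^eZ the truncation x_{(i)} ∈ {0,…,p^i−1} with x_{(i)} ≡ x mod p^i. Then there exists k ∈ {1,…,m} such that γ·(γ^k a)_{(i)} ≢ (γ^{k+1} a)_{(i)} mod p^{i+1}. -/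
theorem aux_not_one (p e m : ℕ) (hp : p.Prime) (he : 1 ≤ e) (hm : m.Prime) (hmd : m ∣ p - 1)
    (γ : ZMod (p ^ e)) (hγ : orderOf γ = m)
    (h1 : (ZMod.castHom (dvd_pow_self p (Nat.one_le_iff_ne_zero.mp he)) (ZMod p)) γ = 1) :
    False := by
  haveI : NeZero (p ^ e) := ⟨pow_ne_zero _ hp.pos.ne'⟩
  haveI : Fact p.Prime := ⟨hp⟩
  have hmul : γ * γ ^ (m - 1) = 1 := by
    rw [← pow_succ']
    have h : m - 1 + 1 = m := by have := hm.pos; omega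
    rw [h, ← hγ]
    exact pow_orderOf_eq_one γ
  obtain ⟨u, hu⟩ := IsUnit.of_mul_eq_one _ hmul
  have hou : orderOf u = m := by rw [← hγ, ← hu, orderOf_units]
  set f := ZMod.unitsMap (dvd_pow_self p (Nat.one_le_iff_ne_zero.mp he)) with hf
  have hfu : f u = 1 := by
    ext
    rw [hf, ZMod.unitsMap_def]
    simpa [hu] using h1
  have hker : u ∈ f.ker := hfu
  have hdvd : m ∣ Nat.card f.ker := by
    rw [← hou, ← Subgroup.orderOf_mk u hker]
    exact orderOf_dvd_natCard _
  have hindex : f.ker.index = p - 1 := by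
    rw [Subgroup.index_ker]
    have hrt : f.range = ⊤ := MonoidHom.range_eq_top_of_surjective f
      (ZMod.unitsMap_surjective _)
    rw [hrt]
    have : Nat.card (⊤ : Subgroup (ZMod p)ˣ) = Nat.card (ZMod p)ˣ :=
      Nat.card_congr Subgroup.topEquiv.toEquiv
    rw [this, Nat.card_eq_fintype_card, ZMod.card_units_eq_totient, Nat.totient_prime hp]
  have hcard : Nat.card f.ker * f.ker.index = Nat.card (ZMod (p ^ e))ˣ :=
    Subgroup.card_mul_index _
  have hG : Nat.card (ZMod (p ^ e))ˣ = p ^ (e - 1) * (p - 1) := by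
    rw [Nat.card_eq_fintype_card, ZMod.card_units_eq_totient, Nat.totient_prime_pow hp he]
  rw [hindex, hG] at hcard
  have hk : Nat.card f.ker = p ^ (e - 1) :=
    Nat.eq_of_mul_eq_mul_right (by have := hp.two_le; omega) hcard
  rw [hk] at hdvd
  have hmp : m = p := (Nat.prime_dvd_prime_iff_eq hm hp).mp (hm.dvd_of_dvd_pow hdvd)
  have h2 := Nat.le_of_dvd (by have := hp.two_le; omega) hmd
  have := hp.two_le
  omega

/-- Let `γ ∈ Z/p^eZ` have multiplicative order `m`, a prime dividing `p - 1`, and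
let `1 ≤ i < e` and `a` with `p ^ i ∤ ã`. Writing `x_{(i)} = x.val % p ^ i`, there
exists `k ∈ {1, …, m}` with `γ̃ * (γ ^ k * a)_{(i)} ≢ (γ ^ (k+1) * a)_{(i)}`
modulo `p ^ (i + 1)`. -/
theorem stmt_19 (p e m : ℕ) (hp : p.Prime) (hodd : Odd p) (he : 2 ≤ e)
    (hm : m.Prime) (hmd : m ∣ p - 1)
    (γ : ZMod (p ^ e)) (hγ : orderOf γ = m)
    (i : ℕ) (hi1 : 1 ≤ i) (hie : i < e)
    (a : ZMod (p ^ e)) (ha : ¬ p ^ i ∣ a.val) :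
    ∃ k : ℕ, 1 ≤ k ∧ k ≤ m ∧
      ¬ (γ.val * ((γ ^ k * a).val % p ^ i) ≡
          (γ ^ (k + 1) * a).val % p ^ i [MOD p ^ (i + 1)]) := by
  haveI : NeZero (p ^ e) := ⟨pow_ne_zero _ hp.pos.ne'⟩
  haveI : Fact (1 < p ^ e) := ⟨Nat.one_lt_pow (by omega) hp.one_lt⟩
  have hp2 := hp.two_le
  have hm2 := hm.two_le
  have hpi : 0 < p ^ i := pow_pos hp.pos i
  have hg1 : γ ^ m = 1 := hγ ▸ pow_orderOf_eq_one γ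
  by_contra hcon
  push_neg at hcon
  set x : ℕ → ℕ := fun k => (γ ^ k * a).val % p ^ i with hx
  have hcon' : ∀ k, 1 ≤ k → k ≤ m →
      Nat.ModEq (p ^ (i + 1)) (γ.val * x k) (x (k + 1)) := hcon
  -- each truncation is positive
  have hxpos : ∀ k, 0 < x k := by
    intro k
    rcases Nat.eq_zero_or_pos (x k) with h0 | h
    · exfalso
      have hdvd : p ^ i ∣ (γ ^ k * a).val := Nat.dvd_of_mod_eq_zero h0
      have hmm : (m - 1).succ = m := Nat.succ_pred_eq_of_pos hm.pos
      have hback : γ ^ (k * (m - 1)) * (γ ^ k * a) = a := by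
        rw [← mul_assoc, ← pow_add, ← Nat.mul_succ, hmm, pow_mul', hg1, one_pow, one_mul]
      apply ha
      have hval : a.val = (γ ^ (k * (m - 1))).val * (γ ^ k * a).val % p ^ e := by
        rw [← ZMod.val_mul, hback]
      rw [hval]
      exact (Nat.dvd_mod_iff (pow_dvd_pow p hie.le)).mpr (hdvd.mul_left _)
    · exact h
  have hxlt : ∀ k, x k < p ^ i := fun k => Nat.mod_lt _ hpi
  -- periodicity
  have hxm : x (m + 1) = x 1 := by
    have hpow : γ ^ (m + 1) = γ ^ 1 := by rw [pow_succ, hg1, one_mul, pow_one]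
    show (γ ^ (m + 1) * a).val % p ^ i = (γ ^ 1 * a).val % p ^ i
    rw [hpow]
  set S := ∑ k ∈ Finset.range m, x (k + 1) with hS
  -- divisibility of the sum
  have hγ0 : γ ≠ 0 := by
    intro h0
    rw [h0, zero_pow (by omega : m ≠ 0)] at hg1
    exact zero_ne_one hg1
  have hγv1 : 1 ≤ γ.val :=
    Nat.pos_of_ne_zero (fun h => hγ0 ((ZMod.val_eq_zero γ).mp h))
  have hnd : ¬ p ∣ (γ.val - 1) := by
    intro hdvd
    apply aux_not_one p e m hp (by omega) hm hmd γ hγ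
    have hmod : γ.val ≡ 1 [MOD p] := ((Nat.modEq_iff_dvd' hγv1).mpr hdvd).symm
    have h1' : ((γ.val : ZMod p)) = 1 := by
      have := (Nat.modEq_iff_dvd' hγv1).mpr hdvd
      exact_mod_cast (ZMod.natCast_eq_natCast_iff _ _ _).mpr hmod
    rw [ZMod.castHom_apply, ← ZMod.natCast_val]
    exact h1'
  have hun : IsUnit ((γ.val : ZMod (p ^ (i + 1))) - 1) := by
    have hc : ((γ.val - 1 : ℕ) : ZMod (p ^ (i + 1))) = (γ.val : ZMod (p ^ (i + 1))) - 1 := by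
      push_cast [hγv1]
      ring
    rw [← hc, ZMod.isUnit_iff_coprime]
    exact Nat.Coprime.pow_right _ (((Nat.Prime.coprime_iff_not_dvd hp).mpr hnd).symm)
  have hcast : ∀ k ∈ Finset.range m,
      ((γ.val * x (k + 1) : ℕ) : ZMod (p ^ (i + 1))) = ((x (k + 1 + 1) : ℕ) : ZMod (p ^ (i + 1))) := by
    intro k hk
    rw [Finset.mem_range] at hk
    exact (ZMod.natCast_eq_natCast_iff _ _ _).mpr (hcon' (k + 1) (by omega) (by omega))
  have hnat' : ∑ k ∈ Finset.range m, x (k + 1 + 1) = S := by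
    have e1 := Finset.sum_range_succ' (fun k => x (k + 1)) m
    have e2 := Finset.sum_range_succ (fun k => x (k + 1)) m
    simp only [Nat.zero_add] at e1 e2
    rw [hxm] at e2
    omega
  have hsum : ((γ.val : ZMod (p ^ (i + 1))) - 1) * (S : ZMod (p ^ (i + 1))) = 0 := by
    have h1 : (γ.val : ZMod (p ^ (i + 1))) * (S : ZMod (p ^ (i + 1)))
        = ∑ k ∈ Finset.range m, ((x (k + 1 + 1) : ℕ) : ZMod (p ^ (i + 1))) := by
      rw [hS, Nat.cast_sum, Finset.mul_sum]
      refine Finset.sum_congr rfl fun k hk => ?_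
      rw [← Nat.cast_mul]
      exact hcast k hk
    have h2 : ∑ k ∈ Finset.range m, ((x (k + 1 + 1) : ℕ) : ZMod (p ^ (i + 1)))
        = (S : ZMod (p ^ (i + 1))) := by
      rw [← Nat.cast_sum, hnat']
    rw [sub_mul, one_mul, h1, h2, sub_self]
  have hSz : (S : ZMod (p ^ (i + 1))) = 0 := (hun.mul_right_eq_zero).mp hsum
  have key : p ^ (i + 1) ∣ S := (ZMod.natCast_eq_zero_iff _ _).mp hSz
  -- size contradiction
  have hSpos : 0 < S :=
    Finset.sum_pos (fun k _ => hxpos _) ⟨0, Finset.mem_range.mpr (by omega)⟩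
  have hSle : S ≤ m * (p ^ i - 1) := by
    have := Finset.sum_le_card_nsmul (Finset.range m) (fun k => x (k + 1)) (p ^ i - 1)
      (fun k _ => Nat.le_sub_one_of_lt (hxlt (k + 1)))
    simpa [smul_eq_mul] using this
  have hmle : m ≤ p - 1 := Nat.le_of_dvd (by omega) hmd
  have hle2 : S ≤ (p - 1) * p ^ i :=
    le_trans hSle (Nat.mul_le_mul hmle (Nat.sub_le _ _))
  have hlt3 : (p - 1) * p ^ i < p * p ^ i :=
    Nat.mul_lt_mul_of_lt_of_le (by omega) le_rfl hpi
  have h3 : p ^ (i + 1) = p * p ^ i := by rw [pow_succ]; ring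
  have := Nat.le_of_dvd hSpos key
  omega
end
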